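/- Let i ≥ 2, n ≥ 1, and let A_1, …, A_i and B_1, …, B_i be n × n matrices with entries in k. If the S_i-modules coker(x·I_n + Σ_{j=1}^i A_j·y_j) and coker(x·I_n + Σ_{j=1}^i B_j·y_j) are isomorphic, then there exists an invertible n × n matrix P over k with P·A_j·P⁻¹ = B_j for all j = 1, …, i. -/

import Mathlib

set_option synthInstance.maxHeartbeats 1000000
set_option maxHeartbeats 1000000

open MvPolynomial

noncomputable section

/-- The defining ideal `(X², (Y₁,…,Y_i)²)` of `S_i` in `k[X,Y₁,…,Y_i]`;
the variable `X 0` plays the role of `X` and `X j.succ` the role of `Y_j`. -/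
abbrev SIdeal (k : Type) [Field k] (i : ℕ) : Ideal (MvPolynomial (Fin (i + 1)) k) :=
  Ideal.span ({X 0 ^ 2} ∪ {p | ∃ a b : Fin i, p = X a.succ * X b.succ})

/-- `S_i = k[X,Y₁,…,Y_i]/(X², (Y₁,…,Y_i)²)`. -/
abbrev Sring (k : Type) [Field k] (i : ℕ) := MvPolynomial (Fin (i + 1)) k ⧸ SIdeal k i

/-- `x`, the residue class of `X` in `S_i`. -/
abbrev xS (k : Type) [Field k] (i : ℕ) : Sring k i := Ideal.Quotient.mk _ (X 0)

/-- `y_j`, the residue class of `Y_j` in `S_i`. -/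
abbrev yS (k : Type) [Field k] (i : ℕ) (j : Fin i) : Sring k i :=
  Ideal.Quotient.mk _ (X j.succ)

/-- The maximal ideal `𝔫_i = (x, y₁, …, y_i)` of `S_i`. -/
abbrev nS (k : Type) [Field k] (i : ℕ) : Ideal (Sring k i) :=
  Ideal.span ({xS k i} ∪ Set.range (yS k i))

/-- The presentation map `S_iⁿ → S_iⁿ` given by the matrix `x·I_n + Σ_j C_j·y_j`. -/
abbrev presMap (k : Type) [Field k] (i n : ℕ) (C : Fin i → Matrix (Fin n) (Fin n) k) :
    (Fin n → Sring k i) →ₗ[Sring k i] (Fin n → Sring k i) :=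
  Matrix.mulVecLin (xS k i • (1 : Matrix (Fin n) (Fin n) (Sring k i)) +
    ∑ j, yS k i j • (C j).map (algebraMap k (Sring k i)))

/-- `coker(x·I_n + Σ_j C_j·y_j)` as an `S_i`-module. -/
abbrev Coker (k : Type) [Field k] (i n : ℕ) (C : Fin i → Matrix (Fin n) (Fin n) k) :=
  (Fin n → Sring k i) ⧸ LinearMap.range (presMap k i n C)

namespace Stmt14Aux

open TrivSqZeroExt Matrix

variable (k : Type) [Field k] (i : ℕ)

/-- The presentation matrix `x·I + Σ_j C_j·y_j`. -/
def presMat (n : ℕ) (C : Fin i → Matrix (Fin n) (Fin n) k) :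
    Matrix (Fin n) (Fin n) (Sring k i) :=
  xS k i • (1 : Matrix (Fin n) (Fin n) (Sring k i)) +
    ∑ j, yS k i j • (C j).map (algebraMap k (Sring k i))

/-- values for the algebra map `S → k[ε]` reading off the coefficient of `x`. -/
def vXx : Fin (i + 1) → DualNumber k :=
  fun v => if v = 0 then (DualNumber.eps : DualNumber k) else 0

/-- values for the algebra map `S → k[ε]` reading off the coefficient of `y_j`. -/
def vXy (j : Fin i) : Fin (i + 1) → DualNumber k :=
  fun v => if v = j.succ then (DualNumber.eps : DualNumber k) else 0

lemma aeval_vXx_zero : ∀ p ∈ SIdeal k i, aeval (vXx k i) p = 0 := by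
  intro p hp
  have hspan : SIdeal k i ≤
      RingHom.ker (aeval (vXx k i) :
        MvPolynomial (Fin (i + 1)) k →ₐ[k] DualNumber k).toRingHom := by
    rw [Ideal.span_le]
    rintro q (rfl | ⟨a, b, rfl⟩) <;>
      simp [RingHom.mem_ker, vXx, pow_two, DualNumber.eps_mul_eps, Fin.succ_ne_zero]
  exact hspan hp

lemma aeval_vXy_zero (j : Fin i) : ∀ p ∈ SIdeal k i, aeval (vXy k i j) p = 0 := by
  intro p hp
  have hspan : SIdeal k i ≤
      RingHom.ker (aeval (vXy k i j) :
        MvPolynomial (Fin (i + 1)) k →ₐ[k] DualNumber k).toRingHom := by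
    rw [Ideal.span_le]
    rintro q (rfl | ⟨a, b, rfl⟩)
    · have h0 : (0 : Fin (i + 1)) ≠ j.succ := (Fin.succ_ne_zero j).symm
      simp [RingHom.mem_ker, vXy, pow_two, h0]
    · simp only [SetLike.mem_coe, RingHom.mem_ker, AlgHom.toRingHom_eq_coe, RingHom.coe_coe, _root_.map_mul, aeval_X, vXy]
      split_ifs <;> simp [DualNumber.eps_mul_eps]
  exact hspan hp

lemma aeval_zero_zero : ∀ p ∈ SIdeal k i, aeval (fun _ : Fin (i + 1) => (0 : k)) p = 0 := by
  intro p hp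
  have hspan : SIdeal k i ≤
      RingHom.ker (aeval (fun _ : Fin (i + 1) => (0 : k)) :
        MvPolynomial (Fin (i + 1)) k →ₐ[k] k).toRingHom := by
    rw [Ideal.span_le]
    rintro q (rfl | ⟨a, b, rfl⟩) <;> simp [RingHom.mem_ker, pow_two]
  exact hspan hp

/-- The `k`-algebra map `S → k[ε]`, `x ↦ ε`, `y_j ↦ 0`. -/
def Psix : Sring k i →ₐ[k] DualNumber k :=
  Ideal.Quotient.liftₐ _ (aeval (vXx k i)) (aeval_vXx_zero k i)

/-- The `k`-algebra map `S → k[ε]`, `x ↦ 0`, `y_j ↦ ε`, other `y`'s `↦ 0`. -/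
def Psiy (j : Fin i) : Sring k i →ₐ[k] DualNumber k :=
  Ideal.Quotient.liftₐ _ (aeval (vXy k i j)) (aeval_vXy_zero k i j)

/-- The residue map `S → k`. -/
def Pi0 : Sring k i →ₐ[k] k :=
  Ideal.Quotient.liftₐ _ (aeval (fun _ => 0)) (aeval_zero_zero k i)

@[simp] lemma Psix_xS : Psix k i (xS k i) = (DualNumber.eps : DualNumber k) := by
  simp [Psix, xS, Ideal.Quotient.liftₐ_apply, Ideal.Quotient.lift_mk, vXx]
  erw [Ideal.Quotient.lift_mk]
  simp [vXx]

@[simp] lemma Psix_yS (j : Fin i) : Psix k i (yS k i j) = 0 := by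
  simp [Psix, yS, Ideal.Quotient.liftₐ_apply, Ideal.Quotient.lift_mk, vXx, Fin.succ_ne_zero]
  erw [Ideal.Quotient.lift_mk]
  simp [vXx, Fin.succ_ne_zero]

@[simp] lemma Psiy_xS (j : Fin i) : Psiy k i j (xS k i) = 0 := by
  have h0 : (0 : Fin (i + 1)) ≠ j.succ := (Fin.succ_ne_zero j).symm
  simp [Psiy, xS, Ideal.Quotient.liftₐ_apply, Ideal.Quotient.lift_mk, vXy, h0]
  erw [Ideal.Quotient.lift_mk]
  simp [vXy, h0]

@[simp] lemma Psiy_yS (j l : Fin i) :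
    Psiy k i j (yS k i l) = if l = j then (DualNumber.eps : DualNumber k) else 0 := by
  simp only [Psiy, yS, Ideal.Quotient.liftₐ_apply, Ideal.Quotient.lift_mk, AlgHom.coe_toRingHom,
    aeval_X, vXy]
  erw [Ideal.Quotient.lift_mk]
  simp only [AlgHom.coe_toRingHom, aeval_X, vXy]
  by_cases h : l = j
  · simp [h]
  · have hne : l.succ ≠ j.succ := fun hc => h (Fin.succ_injective _ hc)
    simp [h, hne]

@[simp] lemma Pi0_xS : Pi0 k i (xS k i) = 0 := by
  simp [Pi0, xS, Ideal.Quotient.liftₐ_apply, Ideal.Quotient.lift_mk]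

@[simp] lemma Pi0_yS (j : Fin i) : Pi0 k i (yS k i j) = 0 := by
  simp [Pi0, yS, Ideal.Quotient.liftₐ_apply, Ideal.Quotient.lift_mk]

lemma fst_Psix (s : Sring k i) : (Psix k i s).fst = Pi0 k i s := by
  obtain ⟨p, rfl⟩ := Ideal.Quotient.mk_surjective s
  have h1 : (Psix k i) ((Ideal.Quotient.mk _) p) = aeval (vXx k i) p := by
    simp [Psix, Ideal.Quotient.liftₐ_apply, Ideal.Quotient.lift_mk]
    erw [Ideal.Quotient.lift_mk]
  have h2 : (Pi0 k i) ((Ideal.Quotient.mk _) p) = aeval (fun _ : Fin (i+1) => (0:k)) p := by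
    simp [Pi0, Ideal.Quotient.liftₐ_apply, Ideal.Quotient.lift_mk]
  rw [h1, h2]
  have hcomp : (fstHom (S := k) (R := k) (M := k)) (aeval (vXx k i) p) =
      aeval (fun w => (fstHom (S := k) (R := k) (M := k)) (vXx k i w)) p :=
    MvPolynomial.comp_aeval_apply _ _ p
  have hv : (fun w => (fstHom (S := k) (R := k) (M := k)) (vXx k i w)) =
      (fun _ : Fin (i+1) => (0:k)) := by
    funext v
    simp only [vXx]
    split_ifs <;> simp
  rw [show TrivSqZeroExt.fst (aeval (vXx k i) p) =
    (fstHom (S := k) (R := k) (M := k)) (aeval (vXx k i) p) from rfl, hcomp, hv]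

lemma fst_Psiy (j : Fin i) (s : Sring k i) : (Psiy k i j s).fst = Pi0 k i s := by
  obtain ⟨p, rfl⟩ := Ideal.Quotient.mk_surjective s
  have h1 : (Psiy k i j) ((Ideal.Quotient.mk _) p) = aeval (vXy k i j) p := by
    simp [Psiy, Ideal.Quotient.liftₐ_apply, Ideal.Quotient.lift_mk]
    erw [Ideal.Quotient.lift_mk]
  have h2 : (Pi0 k i) ((Ideal.Quotient.mk _) p) = aeval (fun _ : Fin (i+1) => (0:k)) p := by
    simp [Pi0, Ideal.Quotient.liftₐ_apply, Ideal.Quotient.lift_mk]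
  rw [h1, h2]
  have hcomp : (fstHom (S := k) (R := k) (M := k)) (aeval (vXy k i j) p) =
      aeval (fun w => (fstHom (S := k) (R := k) (M := k)) (vXy k i j w)) p :=
    MvPolynomial.comp_aeval_apply _ _ p
  have hv : (fun w => (fstHom (S := k) (R := k) (M := k)) (vXy k i j w)) =
      (fun _ : Fin (i+1) => (0:k)) := by
    funext v
    simp only [vXy]
    split_ifs <;> simp
  rw [show TrivSqZeroExt.fst (aeval (vXy k i j) p) =
    (fstHom (S := k) (R := k) (M := k)) (aeval (vXy k i j) p) from rfl, hcomp, hv]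

variable {R : Type} [CommRing R] [Algebra k R]

lemma map_presMat (f : Sring k i →ₐ[k] R) (n : ℕ) (C : Fin i → Matrix (Fin n) (Fin n) k) :
    (presMat k i n C).map f =
      f (xS k i) • (1 : Matrix (Fin n) (Fin n) R) +
        ∑ j, f (yS k i j) • (C j).map (algebraMap k R) := by
  ext m l
  simp only [presMat, Matrix.map_apply, Matrix.add_apply, Matrix.sum_apply, Matrix.smul_apply,
    smul_eq_mul, _root_.map_add, map_sum, _root_.map_mul, Matrix.one_apply, apply_ite, _root_.map_one, _root_.map_zero,
    AlgHom.commutes]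

lemma map_presMat_Psix (n : ℕ) (C : Fin i → Matrix (Fin n) (Fin n) k) :
    (presMat k i n C).map (Psix k i) =
      (DualNumber.eps : DualNumber k) •
        ((1 : Matrix (Fin n) (Fin n) k).map (algebraMap k (DualNumber k))) := by
  rw [map_presMat]
  simp [Matrix.map_one (algebraMap k (DualNumber k)) (map_zero _) (map_one _)]

lemma map_presMat_Psiy (n : ℕ) (C : Fin i → Matrix (Fin n) (Fin n) k) (j : Fin i) :
    (presMat k i n C).map (Psiy k i j) =
      (DualNumber.eps : DualNumber k) • ((C j).map (algebraMap k (DualNumber k))) := by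
  rw [map_presMat]
  simp [ite_smul, Finset.sum_ite_eq']

lemma map_presMat_Pi0 (n : ℕ) (C : Fin i → Matrix (Fin n) (Fin n) k) :
    (presMat k i n C).map (Pi0 k i) = 0 := by
  rw [map_presMat]
  simp

lemma snd_aux (q : DualNumber k) (c : k) :
    (q * ((DualNumber.eps : DualNumber k) * algebraMap k (DualNumber k) c)).snd = q.fst * c := by
  simp [TrivSqZeroExt.snd_mul, TrivSqZeroExt.fst_mul, TrivSqZeroExt.algebraMap_eq_inl',
    op_smul_eq_mul, smul_eq_mul]

lemma snd_aux' (q : DualNumber k) (c : k) :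
    (((DualNumber.eps : DualNumber k) * algebraMap k (DualNumber k) c) * q).snd = c * q.fst := by
  simp [TrivSqZeroExt.snd_mul, TrivSqZeroExt.fst_mul, TrivSqZeroExt.algebraMap_eq_inl',
    op_smul_eq_mul, smul_eq_mul, mul_comm]

lemma snd_mul_right (n : ℕ) (Q : Matrix (Fin n) (Fin n) (DualNumber k))
    (N : Matrix (Fin n) (Fin n) k) :
    (Q * ((DualNumber.eps : DualNumber k) • N.map (algebraMap k (DualNumber k)))).map
        (TrivSqZeroExt.snd : DualNumber k → k) =
      Q.map (TrivSqZeroExt.fst : DualNumber k → k) * N := by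
  ext m r
  simp only [Matrix.map_apply, Matrix.mul_apply, Matrix.smul_apply, smul_eq_mul]
  rw [TrivSqZeroExt.snd_sum]
  exact Finset.sum_congr rfl fun l _ => snd_aux k (Q m l) (N l r)

lemma snd_mul_left (n : ℕ) (Q : Matrix (Fin n) (Fin n) (DualNumber k))
    (N : Matrix (Fin n) (Fin n) k) :
    (((DualNumber.eps : DualNumber k) • N.map (algebraMap k (DualNumber k))) * Q).map
        (TrivSqZeroExt.snd : DualNumber k → k) =
      N * Q.map (TrivSqZeroExt.fst : DualNumber k → k) := by
  ext m r
  simp only [Matrix.map_apply, Matrix.mul_apply, Matrix.smul_apply, smul_eq_mul]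
  rw [TrivSqZeroExt.snd_sum]
  exact Finset.sum_congr rfl fun l _ => snd_aux' k (Q l r) (N m l)

/-- Lifting a linear map between cokernels to a matrix over `S`. -/
lemma exists_lift (n : ℕ) (C D : Fin i → Matrix (Fin n) (Fin n) k)
    (ψ : Coker k i n C →ₗ[Sring k i] Coker k i n D) :
    ∃ U : Matrix (Fin n) (Fin n) (Sring k i),
      ∀ w : Fin n → Sring k i,
        Submodule.mkQ (LinearMap.range (presMap k i n D)) (U *ᵥ w) =
          ψ (Submodule.mkQ (LinearMap.range (presMap k i n C)) w) := by
  have hsurj := Submodule.mkQ_surjective (LinearMap.range (presMap k i n D))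
  choose u hu using fun l : Fin n =>
    hsurj (ψ (Submodule.mkQ (LinearMap.range (presMap k i n C)) (Pi.single l 1)))
  refine ⟨Matrix.of fun m l => u l m, ?_⟩
  have key : (Submodule.mkQ (LinearMap.range (presMap k i n D))).comp
      (Matrix.mulVecLin (Matrix.of fun m l => u l m)) =
      ψ.comp (Submodule.mkQ (LinearMap.range (presMap k i n C))) := by
    apply Module.Basis.ext (Pi.basisFun (Sring k i) (Fin n))
    intro l
    simp only [Pi.basisFun_apply, LinearMap.comp_apply, Matrix.mulVecLin_apply,
      Matrix.mulVec_single]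
    have hcol : (fun m => (Matrix.of fun m l => u l m) m l * 1) = u l := by
      funext m; simp
    rw [show MulOpposite.op (1 : Sring k i) • (Matrix.of fun m l => u l m).col l = u l by
      funext m; simp, hu]
  intro w
  exact congrFun (congrArg (fun (f : _ →ₗ[Sring k i] _) => (f : _ → _)) key) w

end Stmt14Aux

open Stmt14Aux TrivSqZeroExt Matrix in
/-- If `coker(x·I + Σ A_j·y_j) ≅ coker(x·I + Σ B_j·y_j)` as `S_i`-modules,
then there is an invertible matrix `P` over `k` with `P·A_j·P⁻¹ = B_j` for all `j`. -/
theorem stmt14 (k : Type) [Field k] [CharZero k] (i n : ℕ) (hi : 2 ≤ i) (hn : 1 ≤ n)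
    (A B : Fin i → Matrix (Fin n) (Fin n) k)
    (h : Nonempty (Coker k i n A ≃ₗ[Sring k i] Coker k i n B)) :
    ∃ P : Matrix (Fin n) (Fin n) k, IsUnit P ∧ ∀ j, P * A j * P⁻¹ = B j := by
  classical
  obtain ⟨φ⟩ := h
  obtain ⟨U, hU⟩ := exists_lift k i n A B φ.toLinearMap
  obtain ⟨W, hW⟩ := exists_lift k i n B A φ.symm.toLinearMap
  set qA := Submodule.mkQ (LinearMap.range (presMap k i n A)) with hqA
  set qB := Submodule.mkQ (LinearMap.range (presMap k i n B)) with hqB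
  have hkerA : ∀ w : Fin n → Sring k i, qA (presMat k i n A *ᵥ w) = 0 := by
    intro w
    rw [hqA, Submodule.mkQ_apply, Submodule.Quotient.mk_eq_zero]
    exact ⟨w, rfl⟩
  have hkerB : ∀ w : Fin n → Sring k i, qB (presMat k i n B *ᵥ w) = 0 := by
    intro w
    rw [hqB, Submodule.mkQ_apply, Submodule.Quotient.mk_eq_zero]
    exact ⟨w, rfl⟩
  -- construct V with U * presMat k i n A = presMat k i n B * V
  have hcolV : ∀ l : Fin n, ∃ t : Fin n → Sring k i, presMat k i n B *ᵥ t = (U * presMat k i n A) *ᵥ Pi.single l 1 := by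
    intro l
    have h0 : qB ((U * presMat k i n A) *ᵥ Pi.single l 1) = 0 := by
      rw [← Matrix.mulVec_mulVec, hU, hkerA, map_zero]
    rw [hqB, Submodule.mkQ_apply, Submodule.Quotient.mk_eq_zero] at h0
    obtain ⟨t, ht⟩ := h0
    exact ⟨t, ht⟩
  choose v hv using hcolV
  set V : Matrix (Fin n) (Fin n) (Sring k i) := Matrix.of fun m l => v l m with hVdef
  have hV : U * presMat k i n A = presMat k i n B * V := by
    ext m l
    have h2 : (presMat k i n B * V) *ᵥ Pi.single l 1 = presMat k i n B *ᵥ v l := by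
      rw [← Matrix.mulVec_mulVec]
      congr 1
      funext m'
      simp [hVdef]
    have h3 := (congrFun h2 m).trans (congrFun (hv l) m)
    simpa [Matrix.mulVec_single] using h3.symm
  -- construct T with W * U = 1 + presMat k i n A * T
  have hcolT : ∀ l : Fin n, ∃ t : Fin n → Sring k i,
      presMat k i n A *ᵥ t = (W * U) *ᵥ Pi.single l 1 - Pi.single l 1 := by
    intro l
    have h0 : qA ((W * U) *ᵥ Pi.single l 1) = qA (Pi.single l 1) := by
      rw [← Matrix.mulVec_mulVec, hW, hU]
      exact φ.symm_apply_apply _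
    rw [hqA, Submodule.mkQ_apply, Submodule.mkQ_apply, Submodule.Quotient.eq] at h0
    obtain ⟨t, ht⟩ := h0
    exact ⟨t, ht⟩
  choose t ht using hcolT
  set T : Matrix (Fin n) (Fin n) (Sring k i) := Matrix.of fun m l => t l m with hTdef
  have hT : W * U = 1 + presMat k i n A * T := by
    ext m l
    have h2 : (presMat k i n A * T) *ᵥ Pi.single l 1 = presMat k i n A *ᵥ t l := by
      rw [← Matrix.mulVec_mulVec]
      congr 1
      funext m'
      simp [hTdef]
    have key : (presMat k i n A * T) m l = (W * U) m l - (1 : Matrix (Fin n) (Fin n) (Sring k i)) m l := by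
      have h3 := (congrFun h2 m).trans (congrFun (ht l) m)
      simpa [Matrix.mulVec_single, Pi.single_apply, Matrix.one_apply] using h3
    rw [Matrix.add_apply, key]
    ring
  -- construct T' with U * W = 1 + presMat k i n B * T'
  have hcolT' : ∀ l : Fin n, ∃ s : Fin n → Sring k i,
      presMat k i n B *ᵥ s = (U * W) *ᵥ Pi.single l 1 - Pi.single l 1 := by
    intro l
    have h0 : qB ((U * W) *ᵥ Pi.single l 1) = qB (Pi.single l 1) := by
      rw [← Matrix.mulVec_mulVec, hU, hW]
      exact φ.apply_symm_apply _
    rw [hqB, Submodule.mkQ_apply, Submodule.mkQ_apply, Submodule.Quotient.eq] at h0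
    obtain ⟨s, hs⟩ := h0
    exact ⟨s, hs⟩
  choose t' ht' using hcolT'
  set T' : Matrix (Fin n) (Fin n) (Sring k i) := Matrix.of fun m l => t' l m with hT'def
  have hT' : U * W = 1 + presMat k i n B * T' := by
    ext m l
    have h2 : (presMat k i n B * T') *ᵥ Pi.single l 1 = presMat k i n B *ᵥ t' l := by
      rw [← Matrix.mulVec_mulVec]
      congr 1
      funext m'
      simp [hT'def]
    have key : (presMat k i n B * T') m l = (U * W) m l - (1 : Matrix (Fin n) (Fin n) (Sring k i)) m l := by
      have h3 := (congrFun h2 m).trans (congrFun (ht' l) m)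
      simpa [Matrix.mulVec_single, Pi.single_apply, Matrix.one_apply] using h3
    rw [Matrix.add_apply, key]
    ring
  -- now apply the algebra maps
  set P : Matrix (Fin n) (Fin n) k := U.map (Pi0 k i) with hPdef
  set PW : Matrix (Fin n) (Fin n) k := W.map (Pi0 k i) with hPWdef
  have mapfst : ∀ (f : Sring k i →ₐ[k] DualNumber k),
      (∀ s, (f s).fst = Pi0 k i s) → ∀ (X : Matrix (Fin n) (Fin n) (Sring k i)),
      (X.map f).map (TrivSqZeroExt.fst : DualNumber k → k) = X.map (Pi0 k i) := by
    intro f hf X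
    ext m l
    simp [Matrix.map_apply, hf]
  -- equation from Psix : U.map Pi0 = V.map Pi0
  have ex : U.map (Pi0 k i) = V.map (Pi0 k i) := by
    have e1 := congrArg (fun X => (Psix k i).mapMatrix X) hV
    simp only [_root_.map_mul, AlgHom.mapMatrix_apply] at e1
    rw [map_presMat_Psix k i n A, map_presMat_Psix k i n B] at e1
    have e2 := congrArg (fun X => Matrix.map X (TrivSqZeroExt.snd : DualNumber k → k)) e1
    simp only [snd_mul_right, snd_mul_left] at e2
    rw [mapfst _ (fst_Psix k i) U, mapfst _ (fst_Psix k i) V, mul_one, one_mul] at e2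
    exact e2
  -- equations from Psiy j : (U.map Pi0) * A j = B j * (V.map Pi0)
  have ey : ∀ j, P * A j = B j * P := by
    intro j
    have e1 := congrArg (fun X => (Psiy k i j).mapMatrix X) hV
    simp only [_root_.map_mul, AlgHom.mapMatrix_apply] at e1
    rw [map_presMat_Psiy k i n A j, map_presMat_Psiy k i n B j] at e1
    have e2 := congrArg (fun X => Matrix.map X (TrivSqZeroExt.snd : DualNumber k → k)) e1
    simp only [snd_mul_right, snd_mul_left] at e2
    rw [mapfst _ (fst_Psiy k i j) U, mapfst _ (fst_Psiy k i j) V] at e2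
    calc P * A j = U.map (Pi0 k i) * A j := by rw [hPdef]
      _ = B j * (V.map (Pi0 k i)) := e2
      _ = B j * P := by rw [hPdef, ex]
  -- equation from Pi0 on hT : PW * P = 1
  have eWU : PW * P = 1 := by
    have e1 := congrArg (fun X => (Pi0 k i).mapMatrix X) hT
    simp only [_root_.map_mul, _root_.map_add, _root_.map_one, AlgHom.mapMatrix_apply] at e1
    rw [map_presMat_Pi0 k i n A, Matrix.zero_mul, add_zero] at e1
    rw [hPWdef, hPdef]
    exact e1
  have eUW : P * PW = 1 := by
    have e1 := congrArg (fun X => (Pi0 k i).mapMatrix X) hT'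
    simp only [_root_.map_mul, _root_.map_add, _root_.map_one, AlgHom.mapMatrix_apply] at e1
    rw [map_presMat_Pi0 k i n B, Matrix.zero_mul, add_zero] at e1
    rw [hPWdef, hPdef]
    exact e1
  refine ⟨P, ⟨⟨P, PW, eUW, eWU⟩, rfl⟩, ?_⟩
  intro j
  rw [Matrix.inv_eq_right_inv eUW, ey j, mul_assoc, eUW, mul_one]
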